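/- Down-sets in the QPE order are convex: if ρ₁, ρ₂, σ are density matrices on M_n(ℂ) with ρ₁ ⊑ σ and ρ₂ ⊑ σ, then for every t ∈ [0,1], (1−t)•ρ₁ + t•ρ₂ ⊑ σ. -/

import Mathlib

open Matrix
open scoped ComplexOrder
open scoped Pointwise

/-- The largest eigenvalue of a matrix (for a positive semidefinite matrix this
equals the operator norm). -/
noncomputable def maxEig {m : Type*} [Fintype m] (A : Matrix m m ℂ) : ℝ :=
  sSup {a : ℝ | ∃ v : m → ℂ, v ≠ 0 ∧ A.mulVec v = (a : ℂ) • v}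

/-- A density matrix: positive semidefinite with trace 1. -/
def IsDensity {m : Type*} [Fintype m] (ρ : Matrix m m ℂ) : Prop :=
  ρ.PosSemidef ∧ ρ.trace = 1

/-- The quantum positive evidence (QPE) order: ρ ⊑ σ iff σ⁺•ρ - ρ⁺•σ ≥ 0. -/
def QPE {m : Type*} [Fintype m] (ρ σ : Matrix m m ℂ) : Prop :=
  (maxEig σ • ρ - maxEig ρ • σ).PosSemidef

section Aux

variable {n : ℕ}

lemma real_smul_isHermitian {A : Matrix (Fin n) (Fin n) ℂ} (hA : A.IsHermitian) (r : ℝ) :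
    (r • A).IsHermitian := by
  unfold Matrix.IsHermitian
  rw [conjTranspose_smul, hA]
  simp

/-- The set appearing in the definition of `maxEig` equals the range of the
eigenvalue function from the spectral theorem. -/
lemma eigSet_eq {A : Matrix (Fin n) (Fin n) ℂ} (hA : A.IsHermitian) :
    {a : ℝ | ∃ v : Fin n → ℂ, v ≠ 0 ∧ A.mulVec v = (a : ℂ) • v}
      = Set.range hA.eigenvalues := by
  ext a
  simp only [Set.mem_setOf_eq, Set.mem_range]
  constructor
  · rintro ⟨v, hv0, hv⟩
    have hspec : a ∈ spectrum ℝ A := by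
      rw [← spectrum.algebraMap_mem_iff ℂ, spectrum.mem_iff]
      intro hu
      rw [Matrix.isUnit_iff_isUnit_det] at hu
      have hM : (algebraMap ℂ (Matrix (Fin n) (Fin n) ℂ) (algebraMap ℝ ℂ a) - A) *ᵥ v = 0 := by
        rw [Algebra.algebraMap_eq_smul_one, sub_mulVec, smul_mulVec, one_mulVec, hv]
        simp
      have hdet : (algebraMap ℂ (Matrix (Fin n) (Fin n) ℂ) (algebraMap ℝ ℂ a) - A).det = 0 :=
        (Matrix.exists_mulVec_eq_zero_iff).mp ⟨v, hv0, hM⟩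
      rw [hdet] at hu
      exact hu.ne_zero rfl
    rwa [hA.spectrum_real_eq_range_eigenvalues, Set.mem_range] at hspec
  · rintro ⟨i, rfl⟩
    refine ⟨⇑(hA.eigenvectorBasis i), ?_, ?_⟩
    · intro h
      exact hA.eigenvectorBasis.orthonormal.ne_zero i (by ext j; exact congrFun h j)
    · rw [hA.mulVec_eigenvectorBasis]
      funext j
      simp [Complex.real_smul]

lemma bddAbove_eigSet {A : Matrix (Fin n) (Fin n) ℂ} (hA : A.IsHermitian) :
    BddAbove {a : ℝ | ∃ v : Fin n → ℂ, v ≠ 0 ∧ A.mulVec v = (a : ℂ) • v} := by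
  rw [eigSet_eq hA]
  exact (Set.finite_range _).bddAbove

lemma eigenvalue_le_maxEig {A : Matrix (Fin n) (Fin n) ℂ} (hA : A.IsHermitian) (i : Fin n) :
    hA.eigenvalues i ≤ maxEig A := by
  apply le_csSup (bddAbove_eigSet hA)
  rw [eigSet_eq hA]
  exact ⟨i, rfl⟩

lemma maxEig_nonneg {A : Matrix (Fin n) (Fin n) ℂ} [Nonempty (Fin n)] (hA : A.PosSemidef) :
    0 ≤ maxEig A := by
  obtain ⟨i⟩ := ‹Nonempty (Fin n)›
  exact le_trans (hA.eigenvalues_nonneg i) (eigenvalue_le_maxEig hA.1 i)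

/-- `maxEig A • 1 - A` is positive semidefinite for Hermitian `A`. -/
lemma rayleigh_psd {A : Matrix (Fin n) (Fin n) ℂ} (hA : A.IsHermitian) :
    (maxEig A • (1 : Matrix (Fin n) (Fin n) ℂ) - A).PosSemidef := by
  have hB : (maxEig A • (1 : Matrix (Fin n) (Fin n) ℂ) - A).IsHermitian :=
    (real_smul_isHermitian Matrix.isHermitian_one _).sub hA
  refine hB.posSemidef_iff_eigenvalues_nonneg.mpr (Pi.le_def.mpr fun i => ?_)
  have hmem : hB.eigenvalues i ∈ spectrum ℝ (maxEig A • (1 : Matrix (Fin n) (Fin n) ℂ) - A) :=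
    hB.eigenvalues_mem_spectrum_real i
  have heq : maxEig A • (1 : Matrix (Fin n) (Fin n) ℂ) - A
      = algebraMap ℝ (Matrix (Fin n) (Fin n) ℂ) (maxEig A) - A := by
    rw [Algebra.algebraMap_eq_smul_one]
  have hmem' : hB.eigenvalues i ∈ ({maxEig A} : Set ℝ) - spectrum ℝ A := by
    rw [spectrum.singleton_sub_eq, ← heq]
    exact hmem
  obtain ⟨x, hx, y, hy, hxy⟩ := Set.mem_sub.mp hmem'
  rw [Set.mem_singleton_iff] at hx
  subst hx
  rw [hA.spectrum_real_eq_range_eigenvalues] at hy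
  obtain ⟨j, rfl⟩ := hy
  rw [← hxy]
  exact sub_nonneg.mpr (eigenvalue_le_maxEig hA j)

/-- Rayleigh quotient bound: `x⋆ A x ≤ maxEig A * ‖x‖²`. -/
lemma quad_le_maxEig {A : Matrix (Fin n) (Fin n) ℂ} (hA : A.IsHermitian) (x : Fin n → ℂ) :
    star x ⬝ᵥ A *ᵥ x ≤ (maxEig A : ℂ) * (star x ⬝ᵥ x) := by
  have h := (rayleigh_psd hA).dotProduct_mulVec_nonneg x
  rw [sub_mulVec, smul_mulVec, one_mulVec, dotProduct_sub, dotProduct_smul,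
    sub_nonneg] at h
  simpa [Complex.real_smul] using h

end Aux

theorem stmt9 {n : ℕ} (ρ₁ ρ₂ σ : Matrix (Fin n) (Fin n) ℂ)
    (h₁ : IsDensity ρ₁) (h₂ : IsDensity ρ₂) (hσ : IsDensity σ)
    (hρ₁ : QPE ρ₁ σ) (hρ₂ : QPE ρ₂ σ) (t : ℝ) (ht : t ∈ Set.Icc (0 : ℝ) 1) :
    QPE ((1 - t) • ρ₁ + t • ρ₂) σ := by
  obtain ⟨ht0, ht1⟩ := ht
  rcases Nat.eq_zero_or_pos n with hn | hn
  · exfalso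
    subst hn
    have := hσ.2
    simp [Matrix.trace] at this
  have : Nonempty (Fin n) := ⟨⟨0, hn⟩⟩
  set ρ := (1 - t) • ρ₁ + t • ρ₂ with hρdef
  have hρherm : ρ.IsHermitian :=
    (real_smul_isHermitian h₁.1.1 _).add (real_smul_isHermitian h₂.1.1 _)
  set m₁ := maxEig ρ₁
  set m₂ := maxEig ρ₂
  set mσ := maxEig σ
  have hm₁ : 0 ≤ m₁ := maxEig_nonneg h₁.1
  have hm₂ : 0 ≤ m₂ := maxEig_nonneg h₂.1
  set c := (1 - t) * m₁ + t * m₂ with hcdef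
  have hc0 : 0 ≤ c := add_nonneg (mul_nonneg (by linarith) hm₁) (mul_nonneg ht0 hm₂)
  -- maxEig ρ ≤ c
  have hmix_le : maxEig ρ ≤ c := by
    apply Real.sSup_le _ hc0
    rintro a ⟨v, hv0, hv⟩
    have hq : (0:ℂ) < star v ⬝ᵥ v := by
      rw [Matrix.dotProduct_star_self_pos_iff]
      exact hv0
    have hexp : star v ⬝ᵥ ρ *ᵥ v
        = ((1 - t : ℝ) : ℂ) * (star v ⬝ᵥ ρ₁ *ᵥ v) + ((t : ℝ) : ℂ) * (star v ⬝ᵥ ρ₂ *ᵥ v) := by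
      rw [hρdef, add_mulVec, smul_mulVec, smul_mulVec, dotProduct_add,
        dotProduct_smul, dotProduct_smul]
      simp [Complex.real_smul]
    have h1 := quad_le_maxEig h₁.1.1 v
    have h2 := quad_le_maxEig h₂.1.1 v
    have hav : star v ⬝ᵥ ρ *ᵥ v = (a : ℂ) * (star v ⬝ᵥ v) := by
      rw [hv, dotProduct_smul, smul_eq_mul]
    have hle : (a : ℂ) * (star v ⬝ᵥ v) ≤ (c : ℂ) * (star v ⬝ᵥ v) := by
      rw [← hav, hexp]
      calc ((1 - t : ℝ) : ℂ) * (star v ⬝ᵥ ρ₁ *ᵥ v) + ((t : ℝ) : ℂ) * (star v ⬝ᵥ ρ₂ *ᵥ v)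
          ≤ ((1 - t : ℝ) : ℂ) * ((m₁ : ℂ) * (star v ⬝ᵥ v))
            + ((t : ℝ) : ℂ) * ((m₂ : ℂ) * (star v ⬝ᵥ v)) := by
            apply add_le_add
            · apply mul_le_mul_of_nonneg_left h1
              rw [← Complex.ofReal_zero, Complex.real_le_real]; linarith
            · apply mul_le_mul_of_nonneg_left h2
              rw [← Complex.ofReal_zero, Complex.real_le_real]; exact ht0
        _ = ((c : ℝ) : ℂ) * (star v ⬝ᵥ v) := by
            rw [hcdef]; push_cast; ring
    have hqre : 0 < (star v ⬝ᵥ v).re := by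
      have := (Complex.lt_def.mp hq).1
      simpa using this
    have hqim : (star v ⬝ᵥ v).im = 0 := by
      have := (Complex.lt_def.mp hq).2
      simpa using this.symm
    have h' := (Complex.le_def.mp hle).1
    rw [Complex.mul_re, Complex.mul_re] at h'
    simp [hqim] at h'
    exact le_of_mul_le_mul_right h' hqre
  -- now prove the PSD statement
  refine PosSemidef.of_dotProduct_mulVec_nonneg ?_ ?_
  · exact ((real_smul_isHermitian hρherm mσ).sub (real_smul_isHermitian hσ.1.1 _))
  · intro x
    have hs : (0:ℂ) ≤ star x ⬝ᵥ σ *ᵥ x := hσ.1.dotProduct_mulVec_nonneg x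
    have hQ1 : (m₁ : ℂ) * (star x ⬝ᵥ σ *ᵥ x) ≤ (mσ : ℂ) * (star x ⬝ᵥ ρ₁ *ᵥ x) := by
      have := hρ₁.dotProduct_mulVec_nonneg x
      rw [sub_mulVec, smul_mulVec, smul_mulVec, dotProduct_sub,
        dotProduct_smul, dotProduct_smul, sub_nonneg] at this
      simpa [Complex.real_smul] using this
    have hQ2 : (m₂ : ℂ) * (star x ⬝ᵥ σ *ᵥ x) ≤ (mσ : ℂ) * (star x ⬝ᵥ ρ₂ *ᵥ x) := by
      have := hρ₂.dotProduct_mulVec_nonneg x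
      rw [sub_mulVec, smul_mulVec, smul_mulVec, dotProduct_sub,
        dotProduct_smul, dotProduct_smul, sub_nonneg] at this
      simpa [Complex.real_smul] using this
    rw [sub_mulVec, smul_mulVec, smul_mulVec, dotProduct_sub,
      dotProduct_smul, dotProduct_smul, sub_nonneg]
    have hexp : star x ⬝ᵥ ρ *ᵥ x
        = ((1 - t : ℝ) : ℂ) * (star x ⬝ᵥ ρ₁ *ᵥ x) + ((t : ℝ) : ℂ) * (star x ⬝ᵥ ρ₂ *ᵥ x) := by
      rw [hρdef, add_mulVec, smul_mulVec, smul_mulVec, dotProduct_add,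
        dotProduct_smul, dotProduct_smul]
      simp [Complex.real_smul]
    have key : (maxEig ρ : ℂ) * (star x ⬝ᵥ σ *ᵥ x) ≤ (mσ : ℂ) * (star x ⬝ᵥ ρ *ᵥ x) := by
      calc (maxEig ρ : ℂ) * (star x ⬝ᵥ σ *ᵥ x)
          ≤ (c : ℂ) * (star x ⬝ᵥ σ *ᵥ x) := by
            apply mul_le_mul_of_nonneg_right _ hs
            rw [Complex.real_le_real]; exact hmix_le
        _ = ((1 - t : ℝ) : ℂ) * ((m₁:ℂ) * (star x ⬝ᵥ σ *ᵥ x))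
            + ((t : ℝ) : ℂ) * ((m₂:ℂ) * (star x ⬝ᵥ σ *ᵥ x)) := by
            rw [hcdef]; push_cast; ring
        _ ≤ ((1 - t : ℝ) : ℂ) * ((mσ:ℂ) * (star x ⬝ᵥ ρ₁ *ᵥ x))
            + ((t : ℝ) : ℂ) * ((mσ:ℂ) * (star x ⬝ᵥ ρ₂ *ᵥ x)) := by
            apply add_le_add
            · apply mul_le_mul_of_nonneg_left hQ1
              rw [← Complex.ofReal_zero, Complex.real_le_real]; linarith
            · apply mul_le_mul_of_nonneg_left hQ2
              rw [← Complex.ofReal_zero, Complex.real_le_real]; exact ht0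
        _ = (mσ : ℂ) * (star x ⬝ᵥ ρ *ᵥ x) := by rw [hexp]; ring
    simpa [Complex.real_smul] using key
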